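/- Let μ and ν be Borel probability measures on [0,1] that vanish on singletons (μ({x}) = ν({x}) = 0 for every x ∈ [0,1]), and suppose there exist disjoint Borel sets B, C ⊆ [0,1] with μ(B) = 1 and ν(C) = 1. Let F_μ(t) = μ([0,t]) and F_ν(t) = ν([0,t]) for t ∈ [0,1]. Then the total variation of F_μ − F_ν over [0,1] equals 2. -/

import Mathlib

open MeasureTheory Set

lemma dist_sub_helper (μ : Measure ℝ) [IsFiniteMeasure μ] {a b : ℝ} (h0 : 0 ≤ a) (hab : a ≤ b) :
    (μ (Icc 0 b)).toReal - (μ (Icc 0 a)).toReal = (μ (Ioc a b)).toReal := by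
  have hu : Icc (0:ℝ) a ∪ Ioc a b = Icc 0 b := Icc_union_Ioc_eq_Icc h0 hab
  have hd : Disjoint (Icc (0:ℝ) a) (Ioc a b) := by
    refine disjoint_left.mpr ?_
    rintro x ⟨_, hx2⟩ ⟨hx3, _⟩
    linarith
  rw [← hu, measure_union hd measurableSet_Ioc,
    ENNReal.toReal_add (measure_ne_top _ _) (measure_ne_top _ _)]
  ring

lemma dist_mono_helper (μ : Measure ℝ) [IsFiniteMeasure μ] {a b : ℝ} (hab : a ≤ b) :
    (μ (Icc 0 a)).toReal ≤ (μ (Icc 0 b)).toReal :=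
  ENNReal.toReal_mono (measure_ne_top _ _) (measure_mono (Icc_subset_Icc_right hab))

lemma dist_le_one_helper (μ : Measure ℝ) (hμu : μ Set.univ = 1) (t : ℝ) :
    (μ (Icc 0 t)).toReal ≤ 1 := by
  have := measure_mono (subset_univ (Icc (0:ℝ) t)) (μ := μ)
  rw [hμu] at this
  simpa using ENNReal.toReal_mono (by simp) this

lemma mem_partition {n : ℕ} (hn0 : 0 < (n:ℝ)) {x : ℝ} (hx1 : 0 < x) (hx2 : x ≤ 1) :
    ∃ i, i < n ∧ x ∈ Ioc ((i:ℝ)/n) (((i:ℝ)+1)/n) := by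
  set k := ⌈(n:ℝ) * x⌉₊ with hk
  have hk1 : 1 ≤ k := Nat.ceil_pos.mpr (by positivity)
  have hkn : k ≤ n := Nat.ceil_le.mpr (by nlinarith)
  have hc : ((k-1 : ℕ):ℝ) = (k:ℝ) - 1 := by
    rw [Nat.cast_sub hk1]; simp
  have hle := Nat.le_ceil ((n:ℝ) * x)
  have hlt := Nat.ceil_lt_add_one (by positivity : (0:ℝ) ≤ (n:ℝ) * x)
  refine ⟨k-1, by omega, ?_, ?_⟩
  · rw [hc, div_lt_iff₀ hn0]
    nlinarith
  · rw [hc, le_div_iff₀ hn0]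
    nlinarith

/-- If `μ`, `ν` are Borel probability measures on `[0,1]` vanishing on
singletons, with disjoint Borel supports `B`, `C` of full measure, then the total variation
of the difference `F_μ - F_ν` of their distribution functions over `[0,1]` equals `2`. -/
theorem totalVariation_eq_two_of_disjoint_supports
    (μ ν : Measure ℝ)
    (hμu : μ Set.univ = 1) (hνu : ν Set.univ = 1)
    (hμI : μ (Icc 0 1) = 1) (hνI : ν (Icc 0 1) = 1)
    (hμs : ∀ x : ℝ, μ {x} = 0) (hνs : ∀ x : ℝ, ν {x} = 0)
    (B C : Set ℝ) (hB : MeasurableSet B) (hC : MeasurableSet C)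
    (hBsub : B ⊆ Icc 0 1) (hCsub : C ⊆ Icc 0 1) (hBC : Disjoint B C)
    (hμB : μ B = 1) (hνC : ν C = 1) :
    eVariationOn (fun t => (μ (Icc 0 t)).toReal - (ν (Icc 0 t)).toReal) (Icc 0 1) = 2 := by
  classical
  haveI : IsProbabilityMeasure μ := ⟨hμu⟩
  haveI : IsProbabilityMeasure ν := ⟨hνu⟩
  set F : ℝ → ℝ := fun t => (μ (Icc 0 t)).toReal - (ν (Icc 0 t)).toReal with hF
  refine le_antisymm ?_ ?_
  · -- upper bound
    rw [eVariationOn]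
    refine iSup_le ?_
    rintro ⟨n, u, hu, us⟩
    have key : ∀ i : ℕ, edist ((μ (Icc 0 (u (i+1)))).toReal - (ν (Icc 0 (u (i+1)))).toReal)
        ((μ (Icc 0 (u i))).toReal - (ν (Icc 0 (u i))).toReal)
        ≤ ENNReal.ofReal (((μ (Icc 0 (u (i+1)))).toReal - (μ (Icc 0 (u i))).toReal)
          + ((ν (Icc 0 (u (i+1)))).toReal - (ν (Icc 0 (u i))).toReal)) := by
      intro i
      rw [edist_dist, Real.dist_eq]
      apply ENNReal.ofReal_le_ofReal
      have h1 := dist_mono_helper μ (hu (Nat.le_succ i))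
      have h2 := dist_mono_helper ν (hu (Nat.le_succ i))
      rw [abs_le]
      constructor <;> linarith
    calc ∑ i ∈ Finset.range n, edist (F (u (i+1))) (F (u i))
        ≤ ∑ i ∈ Finset.range n,
          ENNReal.ofReal (((μ (Icc 0 (u (i+1)))).toReal - (μ (Icc 0 (u i))).toReal)
          + ((ν (Icc 0 (u (i+1)))).toReal - (ν (Icc 0 (u i))).toReal)) :=
          Finset.sum_le_sum fun i _ => key i
      _ = ENNReal.ofReal (∑ i ∈ Finset.range n,
            (((μ (Icc 0 (u (i+1)))).toReal - (μ (Icc 0 (u i))).toReal)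
          + ((ν (Icc 0 (u (i+1)))).toReal - (ν (Icc 0 (u i))).toReal))) := by
          rw [ENNReal.ofReal_sum_of_nonneg]
          intro i _
          have h1 := dist_mono_helper μ (hu (Nat.le_succ i))
          have h2 := dist_mono_helper ν (hu (Nat.le_succ i))
          linarith
      _ ≤ 2 := by
          rw [Finset.sum_add_distrib, Finset.sum_range_sub (fun i => (μ (Icc 0 (u i))).toReal),
            Finset.sum_range_sub (fun i => (ν (Icc 0 (u i))).toReal)]
          have h1 := dist_le_one_helper μ hμu (u n)
          have h2 := dist_le_one_helper ν hνu (u n)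
          have h3 : 0 ≤ (μ (Icc 0 (u 0))).toReal := ENNReal.toReal_nonneg
          have h4 : 0 ≤ (ν (Icc 0 (u 0))).toReal := ENNReal.toReal_nonneg
          have hb : ((μ (Icc 0 (u n))).toReal - (μ (Icc 0 (u 0))).toReal)
            + ((ν (Icc 0 (u n))).toReal - (ν (Icc 0 (u 0))).toReal) ≤ 2 := by linarith
          calc ENNReal.ofReal _ ≤ ENNReal.ofReal 2 := ENNReal.ofReal_le_ofReal hb
            _ = 2 := by norm_num
  · -- lower bound
    have main : ∀ ε : ℝ, 0 < ε → ENNReal.ofReal (2 - 4*ε) ≤ eVariationOn F (Icc 0 1) := by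
      intro ε hε
      have hε' : ENNReal.ofReal ε ≠ 0 := by simpa using hε
      obtain ⟨K, hKB, hKc, hKlt⟩ := hB.exists_isCompact_lt_add (measure_ne_top μ B) hε'
      obtain ⟨L, hLC, hLc, hLlt⟩ := hC.exists_isCompact_lt_add (measure_ne_top ν C) hε'
      have hKcompl : (μ Kᶜ).toReal ≤ ε := by
        have h1 : μ Kᶜ = 1 - μ K := by
          rw [measure_compl hKc.measurableSet (measure_ne_top _ _), hμu]
        have h2 : μ Kᶜ ≤ ENNReal.ofReal ε := by
          rw [h1, tsub_le_iff_right]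
          rw [hμB] at hKlt
          calc (1:ENNReal) ≤ μ K + ENNReal.ofReal ε := hKlt.le
            _ = ENNReal.ofReal ε + μ K := by ring
        calc (μ Kᶜ).toReal ≤ (ENNReal.ofReal ε).toReal := ENNReal.toReal_mono (by simp) h2
          _ = ε := ENNReal.toReal_ofReal hε.le
      have hLcompl : (ν Lᶜ).toReal ≤ ε := by
        have h1 : ν Lᶜ = 1 - ν L := by
          rw [measure_compl hLc.measurableSet (measure_ne_top _ _), hνu]
        have h2 : ν Lᶜ ≤ ENNReal.ofReal ε := by
          rw [h1, tsub_le_iff_right]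
          rw [hνC] at hLlt
          calc (1:ENNReal) ≤ ν L + ENNReal.ofReal ε := hLlt.le
            _ = ENNReal.ofReal ε + ν L := by ring
        calc (ν Lᶜ).toReal ≤ (ENNReal.ofReal ε).toReal := ENNReal.toReal_mono (by simp) h2
          _ = ε := ENNReal.toReal_ofReal hε.le
      have hKmeas : (μ K).toReal ≥ 1 - ε := by
        have hcm := measure_add_measure_compl hKc.measurableSet (μ := μ)
        rw [hμu] at hcm
        have h3 : (μ K).toReal + (μ Kᶜ).toReal = 1 := by
          rw [← ENNReal.toReal_add (measure_ne_top _ _) (measure_ne_top _ _), hcm]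
          simp
        linarith
      have hLmeas : (ν L).toReal ≥ 1 - ε := by
        have hcm := measure_add_measure_compl hLc.measurableSet (μ := ν)
        rw [hνu] at hcm
        have h3 : (ν L).toReal + (ν Lᶜ).toReal = 1 := by
          rw [← ENNReal.toReal_add (measure_ne_top _ _) (measure_ne_top _ _), hcm]
          simp
        linarith
      have hKL : Disjoint K L := hBC.mono hKB hLC
      obtain ⟨δ, hδ, hthick⟩ := hKL.exists_thickenings hKc hLc.isClosed
      obtain ⟨n, hn⟩ := exists_nat_gt (1/δ)
      have hn0 : 0 < (n:ℝ) := lt_trans (by positivity) hn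
      have hmesh : 1/(n:ℝ) < δ := by
        rw [div_lt_iff₀ hn0]
        rw [div_lt_iff₀ hδ] at hn
        linarith [mul_comm δ (n:ℝ)]
      set I : ℕ → Set ℝ := fun i => Ioc ((i:ℝ)/n) (((i:ℝ)+1)/n) with hIdef
      have hIdisj : ∀ i j : ℕ, i < j → Disjoint (I i) (I j) := by
        intro i j hij
        refine Ioc_disjoint_Ioc.mpr ?_
        refine le_trans (min_le_left _ _) (le_trans ?_ (le_max_right _ _))
        have : (i:ℝ) + 1 ≤ (j:ℝ) := by exact_mod_cast hij
        gcongr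
      have hIpair : ∀ i j : ℕ, i ≠ j → Disjoint (I i) (I j) := by
        intro i j hij
        rcases hij.lt_or_gt with h | h
        · exact hIdisj i j h
        · exact (hIdisj j i h).symm
      have hcore : ∀ i : ℕ, (I i ∩ K).Nonempty → (I i ∩ L).Nonempty → False := by
        rintro i ⟨x, hxI, hxK⟩ ⟨y, hyI, hyL⟩
        have hdist : dist y x < δ := by
          rw [Real.dist_eq, abs_lt]
          simp only [hIdef, mem_Ioc] at hxI hyI
          have hlen : ((i:ℝ)+1)/n - (i:ℝ)/n = 1/n := by field_simp; ring
          constructor <;>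
            [nlinarith [hxI.1, hxI.2, hyI.1, hyI.2]; nlinarith [hxI.1, hxI.2, hyI.1, hyI.2]]
        have hy1 : y ∈ Metric.thickening δ K := Metric.mem_thickening_iff.mpr ⟨x, hxK, hdist⟩
        have hy2 : y ∈ Metric.thickening δ L := Metric.self_subset_thickening hδ L hyL
        exact disjoint_left.mp hthick hy1 hy2
      set u : ℕ → ℝ := fun i => min ((i:ℝ)/n) 1 with hudef
      have humono : Monotone u := by
        intro i j hij
        have hij' : (i:ℝ) ≤ j := by exact_mod_cast hij
        exact min_le_min (by gcongr) le_rfl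
      have humem : ∀ i, u i ∈ Icc (0:ℝ) 1 := by
        intro i
        exact ⟨le_min (by positivity) zero_le_one, min_le_right _ _⟩
      have hueq : ∀ i : ℕ, i ≤ n → u i = (i:ℝ)/n := by
        intro i hi
        apply min_eq_left
        rw [div_le_one hn0]
        exact_mod_cast hi
      set a : ℕ → ℝ := fun i => (μ (I i)).toReal with hadef
      set b : ℕ → ℝ := fun i => (ν (I i)).toReal with hbdef
      have hFdiff : ∀ i : ℕ, i < n → F (u (i+1)) - F (u i) = a i - b i := by
        intro i hi
        rw [hueq i hi.le, hueq (i+1) hi]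
        have h0 : (0:ℝ) ≤ (i:ℝ)/n := by positivity
        have hab : (i:ℝ)/n ≤ ((i:ℝ)+1)/n := by gcongr; linarith
        have hcast : ((i+1 : ℕ):ℝ)/n = ((i:ℝ)+1)/n := by push_cast; ring
        simp only [hF, hcast]
        have e1 := dist_sub_helper μ h0 hab
        have e2 := dist_sub_helper ν h0 hab
        simp only [hadef, hbdef, hIdef]
        linarith
      set S : Finset ℕ := (Finset.range n).filter (fun i => Disjoint (I i) L) with hSdef
      set T : Finset ℕ := (Finset.range n).filter (fun i => ¬ Disjoint (I i) L) with hTdef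
      have hsumμ : ∀ s : Finset ℕ, ∑ i ∈ s, a i = (μ (⋃ i ∈ s, I i)).toReal := by
        intro s
        rw [measure_biUnion_finset (fun i _ j _ hij => hIpair i j hij)
          (fun i _ => measurableSet_Ioc), ENNReal.toReal_sum (fun i _ => measure_ne_top _ _)]
      have hsumν : ∀ s : Finset ℕ, ∑ i ∈ s, b i = (ν (⋃ i ∈ s, I i)).toReal := by
        intro s
        rw [measure_biUnion_finset (fun i _ j _ hij => hIpair i j hij)
          (fun i _ => measurableSet_Ioc), ENNReal.toReal_sum (fun i _ => measure_ne_top _ _)]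
      have hSa : 1 - ε ≤ ∑ i ∈ S, a i := by
        rw [hsumμ]
        have hsub : K \ {0} ⊆ ⋃ i ∈ S, I i := by
          rintro x ⟨hxK, hx0⟩
          have hxI : x ∈ Icc (0:ℝ) 1 := hBsub (hKB hxK)
          have hx1 : 0 < x := lt_of_le_of_ne hxI.1 (by simpa [eq_comm] using hx0)
          obtain ⟨i, hi, hxi⟩ := mem_partition hn0 hx1 hxI.2
          have hiS : i ∈ S := by
            rw [hSdef, Finset.mem_filter]
            refine ⟨Finset.mem_range.mpr hi, ?_⟩
            rw [disjoint_right]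
            intro y hyL hyI
            exact hcore i ⟨x, hxi, hxK⟩ ⟨y, hyI, hyL⟩
          exact mem_biUnion hiS hxi
        calc 1 - ε ≤ (μ K).toReal := hKmeas
          _ = (μ (K \ {0})).toReal := by rw [measure_diff_null (hμs 0)]
          _ ≤ (μ (⋃ i ∈ S, I i)).toReal :=
              ENNReal.toReal_mono (measure_ne_top _ _) (measure_mono hsub)
      have hSb : ∑ i ∈ S, b i ≤ ε := by
        rw [hsumν]
        have hsub : (⋃ i ∈ S, I i) ⊆ Lᶜ := by
          refine iUnion₂_subset ?_
          intro i hiS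
          rw [hSdef, Finset.mem_filter] at hiS
          exact hiS.2.subset_compl_right
        calc (ν (⋃ i ∈ S, I i)).toReal ≤ (ν Lᶜ).toReal :=
              ENNReal.toReal_mono (measure_ne_top _ _) (measure_mono hsub)
          _ ≤ ε := hLcompl
      have hTb : 1 - ε ≤ ∑ i ∈ T, b i := by
        rw [hsumν]
        have hsub : L \ {0} ⊆ ⋃ i ∈ T, I i := by
          rintro x ⟨hxL, hx0⟩
          have hxI : x ∈ Icc (0:ℝ) 1 := hCsub (hLC hxL)
          have hx1 : 0 < x := lt_of_le_of_ne hxI.1 (by simpa [eq_comm] using hx0)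
          obtain ⟨i, hi, hxi⟩ := mem_partition hn0 hx1 hxI.2
          have hiT : i ∈ T := by
            rw [hTdef, Finset.mem_filter]
            refine ⟨Finset.mem_range.mpr hi, ?_⟩
            intro hdis
            exact (disjoint_left.mp hdis hxi) hxL
          exact mem_biUnion hiT hxi
        calc 1 - ε ≤ (ν L).toReal := hLmeas
          _ = (ν (L \ {0})).toReal := by rw [measure_diff_null (hνs 0)]
          _ ≤ (ν (⋃ i ∈ T, I i)).toReal :=
              ENNReal.toReal_mono (measure_ne_top _ _) (measure_mono hsub)
      have hTa : ∑ i ∈ T, a i ≤ ε := by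
        rw [hsumμ]
        have hsub : (⋃ i ∈ T, I i) ⊆ Kᶜ := by
          refine iUnion₂_subset ?_
          intro i hiT
          rw [hTdef, Finset.mem_filter] at hiT
          intro x hxI hxK
          have hne : (I i ∩ L).Nonempty := not_disjoint_iff_nonempty_inter.mp hiT.2
          exact hcore i ⟨x, hxI, hxK⟩ hne
        calc (μ (⋃ i ∈ T, I i)).toReal ≤ (μ Kᶜ).toReal :=
              ENNReal.toReal_mono (measure_ne_top _ _) (measure_mono hsub)
          _ ≤ ε := hKcompl
      have hrealsum : 2 - 4*ε ≤ ∑ i ∈ Finset.range n, |F (u (i+1)) - F (u i)| := by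
        have hsplit : ∑ i ∈ Finset.range n, |F (u (i+1)) - F (u i)|
            = ∑ i ∈ S, |F (u (i+1)) - F (u i)| + ∑ i ∈ T, |F (u (i+1)) - F (u i)| := by
          rw [hSdef, hTdef]
          exact (Finset.sum_filter_add_sum_filter_not _ _ _).symm
        have h1 : ∑ i ∈ S, (a i - b i) ≤ ∑ i ∈ S, |F (u (i+1)) - F (u i)| := by
          refine Finset.sum_le_sum ?_
          intro i hiS
          have hi : i < n := Finset.mem_range.mp (Finset.mem_filter.mp hiS).1
          rw [hFdiff i hi]
          exact le_abs_self _
        have h2 : ∑ i ∈ T, (b i - a i) ≤ ∑ i ∈ T, |F (u (i+1)) - F (u i)| := by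
          refine Finset.sum_le_sum ?_
          intro i hiT
          have hi : i < n := Finset.mem_range.mp (Finset.mem_filter.mp hiT).1
          rw [hFdiff i hi]
          rw [abs_sub_comm]
          exact le_abs_self _
        have e1 : ∑ i ∈ S, (a i - b i) = ∑ i ∈ S, a i - ∑ i ∈ S, b i := Finset.sum_sub_distrib a b
        have e2 : ∑ i ∈ T, (b i - a i) = ∑ i ∈ T, b i - ∑ i ∈ T, a i := Finset.sum_sub_distrib b a
        rw [hsplit]
        linarith [h1, h2, e1 ▸ le_refl (∑ i ∈ S, (a i - b i)), e2]
      calc ENNReal.ofReal (2 - 4*ε)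
          ≤ ENNReal.ofReal (∑ i ∈ Finset.range n, |F (u (i+1)) - F (u i)|) :=
            ENNReal.ofReal_le_ofReal hrealsum
        _ = ∑ i ∈ Finset.range n, ENNReal.ofReal (|F (u (i+1)) - F (u i)|) :=
            ENNReal.ofReal_sum_of_nonneg (fun i _ => abs_nonneg _)
        _ = ∑ i ∈ Finset.range n, edist (F (u (i+1))) (F (u i)) := by
            refine Finset.sum_congr rfl ?_
            intro i _
            rw [edist_dist, Real.dist_eq]
        _ ≤ eVariationOn F (Icc 0 1) := eVariationOn.sum_le (f := F) (n := n) humono humem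
    by_contra hlt
    push_neg at hlt
    have hne : eVariationOn F (Icc 0 1) ≠ ⊤ := hlt.ne_top
    set V := (eVariationOn F (Icc 0 1)).toReal with hV
    have hVlt : V < 2 := by
      have := ENNReal.toReal_lt_toReal hne (by norm_num : (2:ENNReal) ≠ ⊤) |>.mpr hlt
      simpa using this
    set ε := (2 - V)/8 with hεdef
    have hε : 0 < ε := by rw [hεdef]; linarith
    have hmain := main ε hε
    have h2 : 2 - 4*ε ≤ V := by
      have := (ENNReal.ofReal_le_iff_le_toReal hne).mp hmain
      linarith [this]
    rw [hεdef] at h2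
    linarith
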